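/- Let A be a non-degenerate algebra and Δ: A → M(A⊗A) a homomorphism whose canonical maps T₁ and T₂ are both bijections from A⊗A onto A⊗A. Then Δ is non-degenerate: Δ(A)(A⊗A) = A⊗A and (A⊗A)Δ(A) = A⊗A. In particular the coproduct of a multiplier Hopf algebra is non-degenerate. -/

import Mathlib

open scoped TensorProduct

/-- The product of a non-unital algebra is non-degenerate. -/
def NonDeg (A : Type*) [Mul A] [Zero A] : Prop :=
  (∀ a : A, (∀ b : A, a * b = 0) → a = 0) ∧ (∀ b : A, (∀ a : A, a * b = 0) → b = 0)

/-- A multiplier of a non-unital algebra: a pair of linear maps `(l, r)` with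
`b * l a = r b * a` for all `a b`. -/
structure Multiplier (A : Type*) [NonUnitalNonAssocSemiring A] [Module ℂ A] where
  l : A →ₗ[ℂ] A
  r : A →ₗ[ℂ] A
  compat : ∀ a b : A, b * l a = r b * a

namespace Multiplier

variable {A : Type*}

section Basic
variable [NonUnitalNonAssocSemiring A] [Module ℂ A]

instance : Zero (Multiplier A) :=
  ⟨⟨0, 0, fun a b => by simp⟩⟩

instance : One (Multiplier A) :=
  ⟨⟨LinearMap.id, LinearMap.id, fun _ _ => rfl⟩⟩

instance : Add (Multiplier A) :=
  ⟨fun x y => ⟨x.l + y.l, x.r + y.r, fun a b => by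
    simp only [LinearMap.add_apply, mul_add, add_mul, x.compat, y.compat]⟩⟩

end Basic

section Assoc
variable [NonUnitalSemiring A] [Module ℂ A]

instance : Mul (Multiplier A) :=
  ⟨fun x y => ⟨x.l ∘ₗ y.l, y.r ∘ₗ x.r, fun a b => by
    simp only [LinearMap.comp_apply]
    rw [x.compat, y.compat]⟩⟩

variable [SMulCommClass ℂ A A] [IsScalarTower ℂ A A]

instance : SMul ℂ (Multiplier A) :=
  ⟨fun s x => ⟨s • x.l, s • x.r, fun a b => by
    simp only [LinearMap.smul_apply]
    rw [mul_smul_comm, smul_mul_assoc, x.compat]⟩⟩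

/-- The canonical embedding of `A` into its multiplier algebra. -/
def emb (c : A) : Multiplier A :=
  ⟨{ toFun := fun a => c * a
     map_add' := mul_add c
     map_smul' := fun s a => mul_smul_comm s c a },
   { toFun := fun b => b * c
     map_add' := fun a b => add_mul a b c
     map_smul' := fun s a => smul_mul_assoc s a c },
   fun a b => (mul_assoc b c a).symm⟩

end Assoc

end Multiplier

section Aux

open TensorProduct LinearMap

variable {A : Type*} [NonUnitalRing A] [Module ℂ A] [SMulCommClass ℂ A A] [IsScalarTower ℂ A A]

private lemma aux_mul_tmul (x : A ⊗[ℂ] A) (c d : A) :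
    x * (c ⊗ₜ[ℂ] d) = TensorProduct.map (mulRight ℂ c) (mulRight ℂ d) x := by
  induction x with
  | zero => simp
  | tmul a b => simp
  | add u v hu hv => rw [add_mul, map_add, hu, hv]

private lemma aux_key1 (hA : NonDeg A) (y : A ⊗[ℂ] A)
    (h : ∀ c : A, TensorProduct.map (mulRight ℂ c) LinearMap.id y = 0) : y = 0 := by
  classical
  let B := Module.Basis.ofVectorSpace ℂ A
  let e : A ⊗[ℂ] A ≃ₗ[ℂ] (_ →₀ A) :=
    (TensorProduct.congr (LinearEquiv.refl ℂ A) B.repr).trans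
      (TensorProduct.finsuppScalarRight ℂ ℂ A _)
  have he : ∀ (f : A →ₗ[ℂ] A) (z : A ⊗[ℂ] A) i,
      e (TensorProduct.map f LinearMap.id z) i = f (e z i) := by
    intro f z i
    induction z with
    | zero => simp
    | tmul a b => simp [e, map_smul]
    | add u v hu hv => simp only [map_add, Finsupp.add_apply, hu, hv]
  have h0 : ∀ i, e y i = 0 := by
    intro i
    apply hA.1
    intro c
    have h1 := he (mulRight ℂ c) y i
    rw [h c] at h1
    simpa using h1.symm
  have h2 : e y = 0 := Finsupp.ext h0
  have := congrArg e.symm h2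
  simpa using this

private lemma aux_key2 (hA : NonDeg A) (y : A ⊗[ℂ] A)
    (h : ∀ d : A, TensorProduct.map LinearMap.id (mulRight ℂ d) y = 0) : y = 0 := by
  classical
  let B := Module.Basis.ofVectorSpace ℂ A
  let e : A ⊗[ℂ] A ≃ₗ[ℂ] (_ →₀ A) :=
    (TensorProduct.congr B.repr (LinearEquiv.refl ℂ A)).trans
      (TensorProduct.finsuppScalarLeft ℂ A _)
  have he : ∀ (f : A →ₗ[ℂ] A) (z : A ⊗[ℂ] A) i,
      e (TensorProduct.map LinearMap.id f z) i = f (e z i) := by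
    intro f z i
    induction z with
    | zero => simp
    | tmul a b => simp [e, map_smul]
    | add u v hu hv => simp only [map_add, Finsupp.add_apply, hu, hv]
  have h0 : ∀ i, e y i = 0 := by
    intro i
    apply hA.1
    intro d
    have h1 := he (mulRight ℂ d) y i
    rw [h d] at h1
    simpa using h1.symm
  have h2 : e y = 0 := Finsupp.ext h0
  have := congrArg e.symm h2
  simpa using this

/-- Non-degeneracy of the tensor product algebra. -/
private lemma aux_tensor_nondeg (hA : NonDeg A) (x : A ⊗[ℂ] A)
    (hx : ∀ u : A ⊗[ℂ] A, x * u = 0) : x = 0 := by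
  apply aux_key2 hA
  intro d
  apply aux_key1 hA
  intro c
  have comp : ∀ z : A ⊗[ℂ] A,
      TensorProduct.map (mulRight ℂ c) LinearMap.id
        (TensorProduct.map LinearMap.id (mulRight ℂ d) z)
      = TensorProduct.map (mulRight ℂ c) (mulRight ℂ d) z := by
    intro z
    induction z with
    | zero => simp
    | tmul a b => simp
    | add u v hu hv => simp only [map_add, hu, hv]
  rw [comp, ← aux_mul_tmul, hx]

private lemma aux_mulLeft_map (c : A) (z u : A ⊗[ℂ] A) :
    (TensorProduct.map (mulLeft ℂ c) LinearMap.id z) * u =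
      TensorProduct.map (mulLeft ℂ c) LinearMap.id (z * u) := by
  induction z with
  | zero => simp
  | tmul a b =>
    induction u with
    | zero => simp
    | tmul x y => simp [mul_assoc]
    | add u₁ u₂ h₁ h₂ => rw [mul_add, mul_add, map_add, h₁, h₂]
  | add z₁ z₂ h₁ h₂ => rw [map_add, add_mul, add_mul, map_add, h₁, h₂]

private lemma aux_mulRight_map (q : A) (z u : A ⊗[ℂ] A) :
    (TensorProduct.map LinearMap.id (mulRight ℂ q) z) * u =
      z * (TensorProduct.map LinearMap.id (mulLeft ℂ q) u) := by
  induction z with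
  | zero => simp
  | tmul a b =>
    induction u with
    | zero => simp
    | tmul x y => simp [mul_assoc]
    | add u₁ u₂ h₁ h₂ => rw [map_add, mul_add, mul_add, h₁, h₂]
  | add z₁ z₂ h₁ h₂ => rw [map_add, add_mul, add_mul, h₁, h₂]

end Aux

/-- If `Δ : A → M(A⊗A)` is a homomorphism whose canonical maps `T₁` and `T₂` are
bijections of `A ⊗ A`, then `Δ` is non-degenerate: `Δ(A)(A⊗A) = A⊗A` and
`(A⊗A)Δ(A) = A⊗A`. In particular the coproduct of a multiplier Hopf algebra is
non-degenerate. -/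
theorem statement10 {A : Type*}
    [NonUnitalRing A] [Module ℂ A] [SMulCommClass ℂ A A] [IsScalarTower ℂ A A]
    (hA : NonDeg A)
    (Δ : A → Multiplier (A ⊗[ℂ] A))
    (hΔadd : ∀ a a' : A, Δ (a + a') = Δ a + Δ a')
    (hΔmul : ∀ a a' : A, Δ (a * a') = Δ a * Δ a')
    (T1 T2 : (A ⊗[ℂ] A) →ₗ[ℂ] (A ⊗[ℂ] A))
    (hT1 : ∀ a b : A,
      (∀ u : A ⊗[ℂ] A, T1 (a ⊗ₜ[ℂ] b) * u =
        (Δ a).l ((TensorProduct.map LinearMap.id (LinearMap.mulLeft ℂ b)) u)) ∧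
      (∀ u : A ⊗[ℂ] A, u * T1 (a ⊗ₜ[ℂ] b) =
        (TensorProduct.map LinearMap.id (LinearMap.mulRight ℂ b)) ((Δ a).r u)))
    (hT2 : ∀ c a : A,
      (∀ u : A ⊗[ℂ] A, T2 (c ⊗ₜ[ℂ] a) * u =
        (TensorProduct.map (LinearMap.mulLeft ℂ c) LinearMap.id) ((Δ a).l u)) ∧
      (∀ u : A ⊗[ℂ] A, u * T2 (c ⊗ₜ[ℂ] a) =
        (Δ a).r ((TensorProduct.map (LinearMap.mulRight ℂ c) LinearMap.id) u)))
    (hbij1 : Function.Bijective T1) (hbij2 : Function.Bijective T2) :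
    Submodule.span ℂ {x : A ⊗[ℂ] A | ∃ (c : A) (u : A ⊗[ℂ] A), x = (Δ c).l u} = ⊤ ∧
    Submodule.span ℂ {x : A ⊗[ℂ] A | ∃ (c : A) (u : A ⊗[ℂ] A), x = (Δ c).r u} = ⊤ := by
  classical
  open TensorProduct LinearMap in
  -- the span of products a*b in A
  let W : Submodule ℂ A := Submodule.span ℂ {x : A | ∃ a b : A, x = a * b}
  -- the span of elements x ⊗ (y*q) in A ⊗ A
  let M : Submodule ℂ (A ⊗[ℂ] A) :=
    Submodule.span ℂ {z : A ⊗[ℂ] A | ∃ x y q : A, z = x ⊗ₜ[ℂ] (y * q)}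
  have hMq : ∀ (q : A) (z : A ⊗[ℂ] A),
      TensorProduct.map LinearMap.id (mulRight ℂ q) z ∈ M := by
    intro q z
    induction z with
    | zero => simpa using M.zero_mem
    | tmul a b =>
      exact Submodule.subset_span ⟨a, b, q, by simp⟩
    | add u v hu hv => rw [map_add]; exact M.add_mem hu hv
  -- the key identity (c ⊗ 1)·(Δ p)(1 ⊗ q) computed in two ways
  have starstar : ∀ c p q : A,
      TensorProduct.map (mulLeft ℂ c) LinearMap.id (T1 (p ⊗ₜ[ℂ] q)) =
        TensorProduct.map LinearMap.id (mulRight ℂ q) (T2 (c ⊗ₜ[ℂ] p)) := by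
    intro c p q
    have hz : ∀ u : A ⊗[ℂ] A,
        (TensorProduct.map (mulLeft ℂ c) LinearMap.id (T1 (p ⊗ₜ[ℂ] q)) -
          TensorProduct.map LinearMap.id (mulRight ℂ q) (T2 (c ⊗ₜ[ℂ] p))) * u = 0 := by
      intro u
      rw [sub_mul, aux_mulLeft_map, aux_mulRight_map, (hT1 p q).1,
        (hT2 c p).1, sub_self]
    have := aux_tensor_nondeg hA _ hz
    exact sub_eq_zero.mp this
  have hMz : ∀ (c : A) (v : A ⊗[ℂ] A),
      TensorProduct.map (mulLeft ℂ c) LinearMap.id v ∈ M := by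
    intro c v
    obtain ⟨y, rfl⟩ := hbij1.2 v
    induction y with
    | zero => simpa using M.zero_mem
    | tmul p q => rw [starstar]; exact hMq q _
    | add u v hu hv => rw [map_add, map_add]; exact M.add_mem hu hv
  -- products span A
  have hW : ∀ b : A, b ∈ W := by
    by_cases h0 : ∀ x : A, x = 0
    · intro b; rw [h0 b]; exact W.zero_mem
    · push_neg at h0
      obtain ⟨a, ha⟩ := h0
      have hc : ∃ c : A, a * c ≠ 0 := by
        by_contra hh
        push_neg at hh
        exact ha (hA.1 a hh)
      obtain ⟨c, hc⟩ := hc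
      obtain ⟨f, hf⟩ : ∃ f : Module.Dual ℂ A, f (a * c) ≠ 0 := by
        by_contra hh
        push_neg at hh
        exact hc ((Module.forall_dual_apply_eq_zero_iff ℂ (a * c)).mp hh)
      intro b
      -- contract the first leg with f
      let F : A ⊗[ℂ] A →ₗ[ℂ] A := TensorProduct.lift
        (LinearMap.mk₂ ℂ (fun p x => f p • x)
          (fun p p' x => by simp [add_smul])
          (fun s p x => by rw [map_smul, smul_eq_mul, mul_smul])
          (fun p x x' => by simp [smul_add])
          (fun s p x => by exact (smul_comm s (f p) x).symm))
      have hFM : ∀ z ∈ M, F z ∈ W := by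
        intro z hz
        induction hz using Submodule.span_induction with
        | mem z hz =>
          obtain ⟨x, y, q, rfl⟩ := hz
          exact W.smul_mem _ (Submodule.subset_span ⟨y, q, rfl⟩)
        | zero => simpa using W.zero_mem
        | add u v hu hv hu' hv' => rw [map_add]; exact W.add_mem hu' hv'
        | smul s u hu hu' => rw [map_smul]; exact W.smul_mem s hu'
      have hmem : TensorProduct.map (mulLeft ℂ a) LinearMap.id (c ⊗ₜ[ℂ] b) ∈ M :=
        hMz a _
      have heq : TensorProduct.map (mulLeft ℂ a) LinearMap.id (c ⊗ₜ[ℂ] b)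
          = (a * c) ⊗ₜ[ℂ] b := by simp
      rw [heq] at hmem
      have hFW : f (a * c) • b ∈ W := hFM _ hmem
      have : (f (a * c))⁻¹ • (f (a * c) • b) ∈ W := W.smul_mem _ hFW
      rwa [smul_smul, inv_mul_cancel₀ hf, one_smul] at this
  -- any submodule containing all products v*u is everything
  have pureMem : ∀ (N : Submodule ℂ (A ⊗[ℂ] A)),
      (∀ v u : A ⊗[ℂ] A, v * u ∈ N) → ∀ a b : A, a ⊗ₜ[ℂ] b ∈ N := by
    intro N hN a b
    have ha := hW a
    induction ha using Submodule.span_induction with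
    | mem x hx =>
      obtain ⟨x₁, x₂, rfl⟩ := hx
      have hb := hW b
      induction hb using Submodule.span_induction with
      | mem y hy =>
        obtain ⟨y₁, y₂, rfl⟩ := hy
        have := hN (x₁ ⊗ₜ[ℂ] y₁) (x₂ ⊗ₜ[ℂ] y₂)
        rwa [Algebra.TensorProduct.tmul_mul_tmul] at this
      | zero => rw [tmul_zero]; exact N.zero_mem
      | add y₁ y₂ h₁ h₂ h₁' h₂' => rw [tmul_add]; exact N.add_mem h₁' h₂'
      | smul s y hy hy' => rw [tmul_smul]; exact N.smul_mem s hy'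
    | zero => rw [zero_tmul]; exact N.zero_mem
    | add x₁ x₂ h₁ h₂ h₁' h₂' => rw [add_tmul]; exact N.add_mem h₁' h₂'
    | smul s x hx hx' => rw [← smul_tmul']; exact N.smul_mem s hx'
  have topMem : ∀ (N : Submodule ℂ (A ⊗[ℂ] A)),
      (∀ v u : A ⊗[ℂ] A, v * u ∈ N) → N = ⊤ := by
    intro N hN
    rw [eq_top_iff]
    rintro z -
    induction z with
    | zero => exact N.zero_mem
    | tmul a b => exact pureMem N hN a b
    | add u v hu hv => exact N.add_mem hu hv
  constructor
  · apply topMem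
    intro v u
    obtain ⟨y, rfl⟩ := hbij1.2 v
    induction y with
    | zero => rw [map_zero, zero_mul]; exact Submodule.zero_mem _
    | tmul p q =>
      rw [(hT1 p q).1]
      exact Submodule.subset_span ⟨p, _, rfl⟩
    | add y₁ y₂ h₁ h₂ =>
      rw [map_add, add_mul]
      exact Submodule.add_mem _ h₁ h₂
  · apply topMem
    intro v u
    obtain ⟨y, rfl⟩ := hbij2.2 u
    induction y with
    | zero => rw [map_zero, mul_zero]; exact Submodule.zero_mem _
    | tmul c p =>
      rw [(hT2 c p).2]
      exact Submodule.subset_span ⟨p, _, rfl⟩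
    | add y₁ y₂ h₁ h₂ =>
      rw [map_add, mul_add]
      exact Submodule.add_mem _ h₁ h₂
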